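/- Let N = M·K with M, K positive integers, and let x₁,…,x_N ∈ [0,1] with average λ = (1/N)Σᵢ xᵢ. Then there exists a partition of {x₁,…,x_N} (as a multiset/indexed family) into K blocks A₁,…,A_K each of size M such that the average of every block Aⱼ is at least λ − 1/M. -/

import Mathlib

open Finset in
theorem partition_preserving_average (M K : ℕ) (hM : 0 < M) (hK : 0 < K)
    (x : Fin (M * K) → ℝ) (hx : ∀ i, x i ∈ Set.Icc (0:ℝ) 1)
    (lam : ℝ) (hlam : lam = (1 / (M * K : ℝ)) * ∑ i, x i) :
    ∃ e : Fin (M * K) ≃ Fin K × Fin M,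
      ∀ j : Fin K, lam - 1 / M ≤ (1 / (M : ℝ)) * ∑ m : Fin M, x (e.symm (j, m)) := by
  obtain ⟨M', rfl⟩ : ∃ M', M = M' + 1 := ⟨M - 1, (Nat.succ_pred_eq_of_pos hM).symm⟩
  set σ := Tuple.sort x with hσdef
  have hmono : Monotone (x ∘ σ) := Tuple.monotone_sort x
  set y : Fin ((M' + 1) * K) → ℝ := x ∘ σ with hy
  have hy0 : ∀ i, 0 ≤ y i := fun i => (hx _).1
  have hy1 : ∀ i, y i ≤ 1 := fun i => (hx _).2
  set ι : Fin (M' + 1) → Fin K → Fin ((M' + 1) * K) :=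
    fun m j => finProdFinEquiv (m, j) with hι
  have hival : ∀ (m : Fin (M' + 1)) (j : Fin K), (ι m j).val = j.val + K * m.val := by
    intro m j; simp [hι, finProdFinEquiv]
  set ψ : Fin K × Fin (M' + 1) ≃ Fin ((M' + 1) * K) :=
    ((Equiv.prodComm (Fin K) (Fin (M' + 1))).trans finProdFinEquiv).trans (σ : Equiv.Perm _)
  refine ⟨ψ.symm, ?_⟩
  intro j
  have happ : ∀ m : Fin (M' + 1), x (ψ.symm.symm (j, m)) = y (ι m j) := by
    intro m
    simp [ψ, hι, hy]
  set T : ℝ := ∑ i, x i with hT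
  have hTy : T = ∑ i, y i := (Equiv.sum_comp σ x).symm
  have hTsplit : T = ∑ m : Fin (M' + 1), ∑ j' : Fin K, y (ι m j') := by
    rw [hTy,
      show (∑ i, y i) = ∑ p : Fin (M' + 1) × Fin K, y (finProdFinEquiv p) from
        (Fintype.sum_equiv finProdFinEquiv _ _ fun p => rfl).symm,
      Fintype.sum_prod_type]
  set S : ℝ := ∑ m : Fin (M' + 1), y (ι m j) with hS
  -- last row bounded by K
  have hlast : ∑ j' : Fin K, y (ι (Fin.last M') j') ≤ K := by
    calc ∑ j' : Fin K, y (ι (Fin.last M') j') ≤ ∑ _j' : Fin K, (1:ℝ) :=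
          Finset.sum_le_sum fun i _ => hy1 _
      _ = K := by simp
  have hrow : ∀ m : Fin M', ∑ j' : Fin K, y (ι m.castSucc j') ≤ K * y (ι m.succ j) := by
    intro m
    calc ∑ j' : Fin K, y (ι m.castSucc j') ≤ ∑ _j' : Fin K, y (ι m.succ j) := by
          refine Finset.sum_le_sum fun j' _ => hmono ?_
          rw [Fin.le_def, hival, hival]
          have : j'.val < K := j'.isLt
          simp [Fin.val_succ, Fin.coe_castSucc]
          nlinarith [j.val.zero_le]
      _ = K * y (ι m.succ j) := by simp [mul_comm]
  have key : T - K ≤ K * S := by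
    have h1 : T = (∑ m : Fin M', ∑ j' : Fin K, y (ι m.castSucc j'))
        + ∑ j' : Fin K, y (ι (Fin.last M') j') := by
      rw [hTsplit, Fin.sum_univ_castSucc]
    have h2 : (∑ m : Fin M', ∑ j' : Fin K, y (ι m.castSucc j'))
        ≤ ∑ m : Fin M', K * y (ι m.succ j) := Finset.sum_le_sum fun m _ => hrow m
    have h3 : S = y (ι 0 j) + ∑ m : Fin M', y (ι m.succ j) := Fin.sum_univ_succ _
    have h4 : (0:ℝ) ≤ y (ι 0 j) := hy0 _
    have h5 : ∑ m : Fin M', K * y (ι m.succ j) = K * ∑ m : Fin M', y (ι m.succ j) :=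
      (Finset.mul_sum _ _ _).symm
    have hK0 : (0:ℝ) ≤ K := Nat.cast_nonneg K
    nlinarith [h1, h2, h3, hlast]
  -- final algebra
  have hsum : ∑ m : Fin (M' + 1), x (ψ.symm.symm (j, m)) = S := by
    rw [hS]; exact Finset.sum_congr rfl fun m _ => happ m
  rw [hsum, hlam]
  have hMpos : (0:ℝ) < ((M' + 1 : ℕ) : ℝ) := by positivity
  have hKpos : (0:ℝ) < (K : ℝ) := by exact_mod_cast hK
  rw [← sub_nonneg]
  have heq : (1 / ((M' + 1 : ℕ) : ℝ)) * S - ((1 / (((M' + 1 : ℕ)) * K : ℝ)) * T - 1 / ((M' + 1 : ℕ) : ℝ))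
      = (K * S - (T - K)) / (((M' + 1 : ℕ) : ℝ) * K) := by
    field_simp
  have : (0:ℝ) ≤ (K * S - (T - K)) / (((M' + 1 : ℕ) : ℝ) * K) :=
    div_nonneg (by linarith) (by positivity)
  push_cast at heq this ⊢
  linarith [heq, this]
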